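/- Suppose the menu (q, t) is incentive compatible in ω, the allocation q is continuous, the type map Θ is continuously differentiable, and C is continuous with a continuous partial derivative C_θ in its second argument. Then the seller's revenue R(ω) := t(ω) − C(q(ω), Θ(ω)) satisfies the revenue-equivalence formula: for all ω, ω′ ∈ [ωl, ωu], R(ω) = R(ω′) − ∫_{ω′}^{ω} C_θ(q(ŝ), Θ(ŝ)) · Θ′(ŝ) dŝ. -/

import Mathlib

open Set MeasureTheory Filter Asymptotics Topology

/-- **Revenue equivalence.** If the menu `(q, t)` is incentive compatible in `ω`, the
allocation `q` is continuous, the type map `Θ` is continuously differentiable, and `C` is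
continuous with continuous partial derivative `Cθ` in its second argument, then the seller's
revenue `R ω = t ω - C (q ω) (Θ ω)` satisfies
`R ω = R ω' - ∫ s in ω'..ω, Cθ (q s) (Θ s) * Θ' s` for all `ω, ω' ∈ [ωl, ωu]`. -/
theorem revenue_equivalence
    (ωl ωu : ℝ) (hω : ωl < ωu)
    (C Cθ : ℝ → ℝ → ℝ) (Θ Θ' q t : ℝ → ℝ)
    (hCcont : Continuous (Function.uncurry C))
    (hCderiv : ∀ x θ, HasDerivAt (fun s => C x s) (Cθ x θ) θ)
    (hCθcont : Continuous (Function.uncurry Cθ))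
    (hΘderiv : ∀ ω ∈ Icc ωl ωu, HasDerivAt Θ (Θ' ω) ω)
    (hΘ'cont : ContinuousOn Θ' (Icc ωl ωu))
    (hqcont : ContinuousOn q (Icc ωl ωu))
    (R : ℝ → ℝ)
    (hR : ∀ ω, R ω = t ω - C (q ω) (Θ ω))
    (hIC : ∀ ω ∈ Icc ωl ωu, ∀ ωh ∈ Icc ωl ωu, R ω ≥ t ωh - C (q ωh) (Θ ω)) :
    ∀ ω ∈ Icc ωl ωu, ∀ ω' ∈ Icc ωl ωu,
      R ω = R ω' - ∫ s in ω'..ω, Cθ (q s) (Θ s) * Θ' s := by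
  have hCθ1 : ∀ y : ℝ, Continuous fun u => Cθ y u := fun y =>
    hCθcont.comp (continuous_const.prodMk continuous_id)
  have hFTC : ∀ (y a b : ℝ), C y b - C y a = ∫ u in a..b, Cθ y u := fun y a b =>
    (intervalIntegral.integral_eq_sub_of_hasDerivAt (fun u _ => hCderiv y u)
      ((hCθ1 y).intervalIntegrable a b)).symm
  have sand : ∀ a ∈ Icc ωl ωu, ∀ b ∈ Icc ωl ωu,
      C (q a) (Θ a) - C (q a) (Θ b) ≤ R b - R a ∧
      R b - R a ≤ C (q b) (Θ a) - C (q b) (Θ b) := by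
    intro a ha b hb
    have h1 := hIC b hb a ha
    have h2 := hIC a ha b hb
    have hra := hR a; have hrb := hR b
    constructor <;> linarith
  have key : ∀ x ∈ Icc ωl ωu,
      HasDerivWithinAt R (-(Cθ (q x) (Θ x) * Θ' x)) (Icc ωl ωu) x := by
    intro x hx
    rw [hasDerivWithinAt_iff_isLittleO]
    have hΘx := hΘderiv x hx
    have hΘO : (fun ω₁ => Θ ω₁ - Θ x) =O[𝓝[Icc ωl ωu] x] fun ω₁ => ω₁ - x :=
      (hΘx.isBigO_sub).mono nhdsWithin_le_nhds
    have h2 : (fun ω₁ => -Cθ (q x) (Θ x) * (Θ ω₁ - Θ x - (ω₁ - x) * Θ' x))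
        =o[𝓝[Icc ωl ωu] x] fun ω₁ => ω₁ - x := by
      have h := (hasDerivAt_iff_isLittleO.mp hΘx).mono
        (nhdsWithin_le_nhds (s := Icc ωl ωu))
      simpa [smul_eq_mul] using h.const_mul_left (-Cθ (q x) (Θ x))
    have h1 : (fun ω₁ => R ω₁ - R x + Cθ (q x) (Θ x) * (Θ ω₁ - Θ x))
        =o[𝓝[Icc ωl ωu] x] fun ω₁ => Θ ω₁ - Θ x := by
      rw [isLittleO_iff]
      intro c hc
      obtain ⟨δ, hδ, hball⟩ : ∃ δ > 0, ∀ y u, |y - q x| < δ → |u - Θ x| < δ →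
          |Cθ y u - Cθ (q x) (Θ x)| ≤ c / 2 := by
        have hct : ContinuousAt (Function.uncurry Cθ) (q x, Θ x) := hCθcont.continuousAt
        rw [Metric.continuousAt_iff] at hct
        obtain ⟨δ, hδ, h⟩ := hct (c / 2) (by linarith)
        refine ⟨δ, hδ, fun y u hy hu => ?_⟩
        have hd : dist ((y, u) : ℝ × ℝ) (q x, Θ x) < δ := by
          rw [Prod.dist_eq]
          exact max_lt (by simpa [Real.dist_eq] using hy) (by simpa [Real.dist_eq] using hu)
        have := h hd
        rw [Real.dist_eq] at this
        exact this.le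
      have hev1 : ∀ᶠ ω₁ in 𝓝[Icc ωl ωu] x, ω₁ ∈ Icc ωl ωu := self_mem_nhdsWithin
      have hev2 : ∀ᶠ ω₁ in 𝓝[Icc ωl ωu] x, |q ω₁ - q x| < δ := by
        have h := (hqcont x hx).eventually
          (Metric.isOpen_ball.eventually_mem (Metric.mem_ball_self hδ))
        filter_upwards [h] with ω₁ h₁
        simpa [Metric.mem_ball, Real.dist_eq] using h₁
      have hev3 : ∀ᶠ ω₁ in 𝓝[Icc ωl ωu] x, |Θ ω₁ - Θ x| < δ := by
        have h := ((hΘderiv x hx).continuousAt.continuousWithinAt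
            (s := Icc ωl ωu)).eventually
          (Metric.isOpen_ball.eventually_mem (Metric.mem_ball_self hδ))
        filter_upwards [h] with ω₁ h₁
        simpa [Metric.mem_ball, Real.dist_eq] using h₁
      filter_upwards [hev1, hev2, hev3] with ω₁ h₁ h₂ h₃
      set a := Θ x with ha
      set b := Θ ω₁ with hb
      set K := Cθ (q x) (Θ x) with hK
      have hub : ∀ u ∈ Set.uIoc a b, |u - a| < δ := by
        intro u hu
        rw [Set.mem_uIoc] at hu
        rw [abs_lt] at h₃ ⊢
        rcases hu with ⟨h, h'⟩ | ⟨h, h'⟩ <;> constructor <;> linarith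
      have bound : ∀ y : ℝ, |y - q x| < δ →
          |C y a - C y b + K * (b - a)| ≤ c / 2 * |b - a| := by
        intro y hy
        have e1 : ∫ u in a..b, (Cθ y u - K) = (C y b - C y a) - (b - a) * K := by
          rw [intervalIntegral.integral_sub ((hCθ1 y).intervalIntegrable a b)
            intervalIntegrable_const, ← hFTC, intervalIntegral.integral_const, smul_eq_mul]
        have e2 : C y a - C y b + K * (b - a) = -((C y b - C y a) - (b - a) * K) := by ring
        rw [e2, abs_neg, ← Real.norm_eq_abs, ← e1]
        exact intervalIntegral.norm_integral_le_of_norm_le_const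
          (fun u hu => by rw [Real.norm_eq_abs]; exact hball y u hy (hub u hu))
      have B1 := bound (q x) (by simpa using hδ)
      have B2 := bound (q ω₁) h₂
      obtain ⟨hlo, hhi⟩ := sand x hx ω₁ h₁
      rw [Real.norm_eq_abs, Real.norm_eq_abs]
      rw [abs_le] at B1 B2 ⊢
      constructor <;> nlinarith [abs_nonneg (b - a), hc.le]
    have htot := (h1.trans_isBigO hΘO).add h2
    refine htot.congr_left fun ω₁ => ?_
    simp only [smul_eq_mul]
    ring
  intro ω hωm ω' hω'm
  have hsub : Set.uIcc ω' ω ⊆ Icc ωl ωu := Set.uIcc_subset_Icc hω'm hωm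
  have hgcont : ContinuousOn (fun s => Cθ (q s) (Θ s) * Θ' s) (Icc ωl ωu) :=
    (hCθcont.comp_continuousOn (hqcont.prodMk
      (fun y hy => ((hΘderiv y hy).continuousAt.continuousWithinAt)))).mul hΘ'cont
  have hint : IntervalIntegrable (fun s => -(Cθ (q s) (Θ s) * Θ' s)) volume ω' ω :=
    ((hgcont.mono hsub).neg).intervalIntegrable
  have hRcont : ContinuousOn R (Set.uIcc ω' ω) := fun y hy =>
    ((key y (hsub hy)).continuousWithinAt).mono hsub
  have hderiv' : ∀ s ∈ Set.Ioo (min ω' ω) (max ω' ω),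
      HasDerivWithinAt R (-(Cθ (q s) (Θ s) * Θ' s)) (Set.Ioi s) s := by
    intro s hs
    have hs1 : s ∈ Icc ωl ωu :=
      ⟨le_trans (le_min hω'm.1 hωm.1) hs.1.le, le_trans hs.2.le (max_le hω'm.2 hωm.2)⟩
    have hlt : s < ωu := lt_of_lt_of_le hs.2 (max_le hω'm.2 hωm.2)
    have hmem : Icc ωl ωu ∈ 𝓝[Set.Ioi s] s := by
      refine Filter.mem_of_superset
        (Filter.inter_mem self_mem_nhdsWithin
          (nhdsWithin_le_nhds (Iio_mem_nhds hlt))) ?_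
      rintro u ⟨hu1, hu2⟩
      exact ⟨le_of_lt (lt_of_le_of_lt hs1.1 hu1), le_of_lt hu2⟩
    exact (key s hs1).mono_of_mem_nhdsWithin hmem
  have hmain := intervalIntegral.integral_eq_sub_of_hasDeriv_right hRcont hderiv' hint
  rw [intervalIntegral.integral_neg] at hmain
  linarith
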